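/- Let X and Y be locally compact Hausdorff spaces, let E and F be real Banach spaces with E nontrivial and F strictly convex, and let T : C₀(X,E) → C₀(Y,F) be a linear isometry. Set Y₁ = ⋃_{x ∈ X} Q_x. Then for every f ∈ C₀(X,E), ‖f‖ = sup{‖Tf(y)‖ : y ∈ Y₁}. -/

import Mathlib

open ZeroAtInfty

variable {X Y E F : Type*}
  [TopologicalSpace X] [LocallyCompactSpace X] [T2Space X]
  [TopologicalSpace Y] [LocallyCompactSpace Y] [T2Space Y]
  [NormedAddCommGroup E] [NormedSpace ℝ E] [CompleteSpace E]
  [NormedAddCommGroup F] [NormedSpace ℝ F] [CompleteSpace F]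

theorem myNorm_apply_le {Z G : Type*} [TopologicalSpace Z] [NormedAddCommGroup G]
    (f : C₀(Z, G)) (x : Z) : ‖f x‖ ≤ ‖f‖ := by
  rw [← ZeroAtInftyContinuousMap.norm_toBCF_eq_norm]
  exact f.toBCF.norm_coe_le_norm x

theorem myNorm_le {Z G : Type*} [TopologicalSpace Z] [NormedAddCommGroup G]
    (f : C₀(Z, G)) {C : ℝ} (hC : 0 ≤ C) (h : ∀ x, ‖f x‖ ≤ C) : ‖f‖ ≤ C := by
  rw [← ZeroAtInftyContinuousMap.norm_toBCF_eq_norm]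
  exact (BoundedContinuousFunction.norm_le hC).mpr h

theorem myCompact {Z G : Type*} [TopologicalSpace Z] [NormedAddCommGroup G]
    (f : C₀(Z, G)) {c : ℝ} (hc : 0 < c) : IsCompact {x | c ≤ ‖f x‖} := by
  have h := zero_at_infty f
  have hU : {e : G | ‖e‖ < c} ∈ nhds (0 : G) := by
    have : Metric.ball (0:G) c ∈ nhds (0:G) := Metric.ball_mem_nhds _ hc
    simpa [Metric.ball, dist_eq_norm] using this
  obtain ⟨K, hK, hKsub⟩ := Filter.mem_cocompact.mp (h hU)
  refine hK.of_isClosed_subset (isClosed_le continuous_const (map_continuous f).norm) ?_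
  intro x hx
  by_contra hxK
  exact absurd (hKsub hxK) (by simpa using hx)

theorem myExists_norm_eq {Z G : Type*} [TopologicalSpace Z] [NormedAddCommGroup G]
    (f : C₀(Z, G)) (hf : f ≠ 0) : ∃ x, ‖f x‖ = ‖f‖ := by
  have hpos : 0 < ‖f‖ := norm_pos_iff.mpr hf
  have hx0 : ∃ x₀, ‖f‖ / 2 < ‖f x₀‖ := by
    by_contra hcon
    push_neg at hcon
    have := myNorm_le f (by positivity) hcon
    linarith
  obtain ⟨x₀, hx₀⟩ := hx0
  have hK : IsCompact {x | ‖f‖ / 2 ≤ ‖f x‖} := myCompact f (by positivity)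
  obtain ⟨x, hxK, hmax⟩ := hK.exists_isMaxOn ⟨x₀, le_of_lt hx₀⟩
    ((map_continuous f).norm.continuousOn)
  refine ⟨x, le_antisymm (myNorm_apply_le f x) (myNorm_le f (norm_nonneg _) ?_ )⟩
  intro z
  by_cases hz : ‖f‖ / 2 ≤ ‖f z‖
  · exact hmax hz
  · exact le_trans (le_of_not_ge hz) (le_trans (le_of_lt hx₀) (hmax (le_of_lt hx₀)))

/-- evaluation as an additive monoid hom -/
def evalHom {Z G : Type*} [TopologicalSpace Z] [NormedAddCommGroup G] (x : Z) :
    C₀(Z, G) →+ G := AddMonoidHom.mk' (fun f => f x) (fun f g => rfl)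

/-- `S_{x,ν} = {f ∈ C₀(X,E) : ν(f(x)) = ‖f‖ = 1}`. -/
def Sset (x : X) (ν : E →L[ℝ] ℝ) : Set C₀(X, E) :=
  {f | ν (f x) = 1 ∧ ‖f‖ = 1}

/-- `R_{y,μ} = {g ∈ C₀(Y,F) : μ(g(y)) = ‖g‖ = 1}`. -/
def Rset (y : Y) (μ : F →L[ℝ] ℝ) : Set C₀(Y, F) :=
  {g | μ (g y) = 1 ∧ ‖g‖ = 1}

/-- `Q_{x,ν}`: the set of `y ∈ Y` such that `T(S_{x,ν}) ⊆ R_{y,μ}` for some `μ` in the unit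
sphere of `F*`, when `S_{x,ν} ≠ ∅`; empty otherwise. -/
def Qnu (T : C₀(X, E) →ₗᵢ[ℝ] C₀(Y, F)) (x : X) (ν : E →L[ℝ] ℝ) : Set Y :=
  {y | (Sset x ν).Nonempty ∧
    ∃ μ : F →L[ℝ] ℝ, ‖μ‖ = 1 ∧ ∀ f ∈ Sset x ν, T f ∈ Rset y μ}

/-- `Q_x = ⋃_{ν ∈ S_{E*}} Q_{x,ν}`. -/
def Qset (T : C₀(X, E) →ₗᵢ[ℝ] C₀(Y, F)) (x : X) : Set Y :=
  ⋃ ν ∈ {ν : E →L[ℝ] ℝ | ‖ν‖ = 1}, Qnu T x ν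

theorem avg_mem_Sset {x : X} {ν : E →L[ℝ] ℝ} (hν : ‖ν‖ = 1)
    {ι : Type*} (u : Finset ι) (hu : u.Nonempty) (g : ι → C₀(X, E))
    (hg : ∀ i ∈ u, g i ∈ Sset x ν) :
    ((u.card : ℝ)⁻¹ • ∑ i ∈ u, g i) ∈ Sset x ν := by
  have hcard : (0:ℝ) < u.card := by exact_mod_cast Finset.card_pos.mpr hu
  have heval : ((u.card : ℝ)⁻¹ • ∑ i ∈ u, g i) x
      = (u.card : ℝ)⁻¹ • ((∑ i ∈ u, g i) x) := rfl
  have hsum : (∑ i ∈ u, g i) x = ∑ i ∈ u, (g i) x := map_sum (evalHom x) g u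
  have hν1 : ν (((u.card : ℝ)⁻¹ • ∑ i ∈ u, g i) x) = 1 := by
    rw [heval, hsum, map_smul, map_sum]
    have : ∑ i ∈ u, ν ((g i) x) = u.card := by
      rw [Finset.sum_congr rfl (fun i hi => (hg i hi).1)]
      simp
    rw [this, smul_eq_mul, inv_mul_cancel₀ (ne_of_gt hcard)]
  refine ⟨hν1, le_antisymm ?_ ?_⟩
  · refine le_trans (norm_smul_le _ _) ?_
    have : ‖∑ i ∈ u, g i‖ ≤ u.card := by
      refine le_trans (norm_sum_le _ _) ?_
      rw [Finset.sum_congr rfl (fun i hi => (hg i hi).2)]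
      simp
    calc ‖((u.card:ℝ)⁻¹ : ℝ)‖ * ‖∑ i ∈ u, g i‖ ≤ (u.card:ℝ)⁻¹ * u.card := by
          apply mul_le_mul _ this (norm_nonneg _) (by positivity)
          rw [Real.norm_eq_abs, abs_of_pos (by positivity)]
      _ = 1 := inv_mul_cancel₀ (ne_of_gt hcard)
  · calc (1:ℝ) = ν (((u.card : ℝ)⁻¹ • ∑ i ∈ u, g i) x) := hν1.symm
      _ ≤ ‖ν (((u.card : ℝ)⁻¹ • ∑ i ∈ u, g i) x)‖ := le_abs_self _
      _ ≤ ‖ν‖ * ‖((u.card : ℝ)⁻¹ • ∑ i ∈ u, g i) x‖ := ν.le_opNorm _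
      _ ≤ 1 * ‖(u.card : ℝ)⁻¹ • ∑ i ∈ u, g i‖ := by
          rw [hν]; exact mul_le_mul_of_nonneg_left (myNorm_apply_le _ _) zero_le_one
      _ = _ := one_mul _

set_option maxHeartbeats 2000000 in
theorem Qnu_nonempty [StrictConvexSpace ℝ F] (T : C₀(X, E) →ₗᵢ[ℝ] C₀(Y, F))
    (x : X) (ν : E →L[ℝ] ℝ) (hν : ‖ν‖ = 1) (hS : (Sset x ν).Nonempty) :
    (Qnu T x ν).Nonempty := by
  classical
  obtain ⟨f₀, hf₀⟩ := hS
  set i₀ : ↥(Sset x ν) := ⟨f₀, hf₀⟩ with hi₀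
  set M : ↥(Sset x ν) → Set Y := fun i => {y | 1 ≤ ‖T (i : C₀(X, E)) y‖} with hM
  have hTnorm : ∀ i : ↥(Sset x ν), ‖T (i : C₀(X, E))‖ = 1 := fun i => by
    rw [T.norm_map]; exact i.2.2
  have hMclosed : ∀ i, IsClosed (M i) := fun i =>
    isClosed_le continuous_const (map_continuous (T (i : C₀(X, E)))).norm
  have hMcomp : IsCompact (M i₀) := myCompact (T f₀) one_pos
  have hμbound : ∀ (μ : F →L[ℝ] ℝ), ‖μ‖ = 1 → ∀ (i : ↥(Sset x ν)) (y : Y),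
      μ (T (i : C₀(X, E)) y) ≤ 1 := by
    intro μ hμ i y
    calc μ (T (i : C₀(X, E)) y) ≤ ‖μ (T (i : C₀(X, E)) y)‖ := le_abs_self _
      _ ≤ ‖μ‖ * ‖T (i : C₀(X, E)) y‖ := μ.le_opNorm _
      _ ≤ 1 * ‖T (i : C₀(X, E))‖ := by
          rw [hμ]; exact mul_le_mul_of_nonneg_left (myNorm_apply_le _ _) zero_le_one
      _ = 1 := by rw [one_mul, hTnorm]
  have hfin : ∀ u : Finset ↥(Sset x ν), (M i₀ ∩ ⋂ i ∈ u, M i).Nonempty := by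
    intro u
    set u' := insert i₀ u with hu'def
    have hu' : u'.Nonempty := ⟨i₀, Finset.mem_insert_self _ _⟩
    have hcard : (0:ℝ) < u'.card := by exact_mod_cast Finset.card_pos.mpr hu'
    set g : C₀(X, E) := (u'.card : ℝ)⁻¹ • ∑ i ∈ u', (i : C₀(X, E)) with hgdef
    have hgS : g ∈ Sset x ν := avg_mem_Sset hν u' hu' _ (fun i _ => i.2)
    have hTg : ‖T g‖ = 1 := by rw [T.norm_map]; exact hgS.2
    have hTgne : T g ≠ 0 := by
      intro h; rw [h, norm_zero] at hTg; norm_num at hTg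
    obtain ⟨y, hy⟩ := myExists_norm_eq (T g) hTgne
    rw [hTg] at hy
    have hne : T g y ≠ 0 := by
      intro h; rw [h, norm_zero] at hy; norm_num at hy
    obtain ⟨μ, hμ, hμval0⟩ := exists_dual_vector ℝ (T g y) (norm_ne_zero_iff.mpr hne)
    rw [hy] at hμval0
    have hμval : μ (T g y) = 1 := by exact_mod_cast hμval0
    have hexp : μ (T g y) = (u'.card : ℝ)⁻¹ * ∑ i ∈ u', μ (T (i : C₀(X, E)) y) := by
      have h1 : T g = (u'.card : ℝ)⁻¹ • ∑ i ∈ u', T (i : C₀(X, E)) := by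
        rw [hgdef, map_smul, map_sum]
      have h2 : T g y = (u'.card : ℝ)⁻¹ • ((∑ i ∈ u', T (i : C₀(X, E))) y) := by
        rw [h1]; rfl
      have h3 : (∑ i ∈ u', T (i : C₀(X, E))) y = ∑ i ∈ u', T (i : C₀(X, E)) y :=
        map_sum (evalHom y) _ u'
      rw [h2, h3, map_smul, map_sum, smul_eq_mul]
    have hsum : ∑ i ∈ u', μ (T (i : C₀(X, E)) y) = u'.card := by
      have := hexp.symm.trans hμval
      field_simp at this
      linarith [this]
    have hall : ∀ i ∈ u', μ (T (i : C₀(X, E)) y) = 1 := by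
      by_contra hcon
      push_neg at hcon
      obtain ⟨j, hj, hjne⟩ := hcon
      have hlt : ∑ i ∈ u', μ (T (i : C₀(X, E)) y) < ∑ _i ∈ u', (1:ℝ) :=
        Finset.sum_lt_sum (fun i _ => hμbound μ hμ i y)
          ⟨j, hj, lt_of_le_of_ne (hμbound μ hμ j y) hjne⟩
      rw [hsum] at hlt
      simp at hlt
    have hmem : ∀ i ∈ u', y ∈ M i := by
      intro i hi
      show 1 ≤ ‖T (i : C₀(X, E)) y‖
      calc (1:ℝ) = μ (T (i : C₀(X, E)) y) := (hall i hi).symm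
        _ ≤ ‖μ (T (i : C₀(X, E)) y)‖ := le_abs_self _
        _ ≤ ‖μ‖ * ‖T (i : C₀(X, E)) y‖ := μ.le_opNorm _
        _ = ‖T (i : C₀(X, E)) y‖ := by rw [hμ, one_mul]
    refine ⟨y, hmem i₀ (Finset.mem_insert_self _ _), ?_⟩
    simp only [Set.mem_iInter]
    exact fun i hi => hmem i (Finset.mem_insert_of_mem hi)
  obtain ⟨y, _, hy⟩ := hMcomp.inter_iInter_nonempty M hMclosed hfin
  rw [Set.mem_iInter] at hy
  have hnorm1 : ∀ i : ↥(Sset x ν), ‖T (i : C₀(X, E)) y‖ = 1 := fun i =>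
    le_antisymm (le_trans (myNorm_apply_le _ _) (le_of_eq (hTnorm i))) (hy i)
  have weq : ∀ i : ↥(Sset x ν), T (i : C₀(X, E)) y = T f₀ y := by
    intro i
    rcases eq_or_ne i i₀ with rfl | hne
    · rfl
    · have hpair : ({i₀, i} : Finset ↥(Sset x ν)).card = 2 := Finset.card_pair (Ne.symm hne)
      have hg2eq : ((({i₀, i} : Finset ↥(Sset x ν)).card : ℝ)⁻¹ •
            ∑ j ∈ ({i₀, i} : Finset ↥(Sset x ν)), (j : C₀(X, E)))
          = (2:ℝ)⁻¹ • (f₀ + (i : C₀(X, E))) := by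
        rw [Finset.sum_pair (Ne.symm hne), hpair]
        norm_num
        rfl
      have hg2S : (2:ℝ)⁻¹ • (f₀ + (i : C₀(X, E))) ∈ Sset x ν :=
        hg2eq ▸ avg_mem_Sset hν _ ⟨i₀, Finset.mem_insert_self _ _⟩ _ (fun j _ => j.2)
      have h1 : ‖T ((2:ℝ)⁻¹ • (f₀ + (i : C₀(X, E)))) y‖ = 1 :=
        hnorm1 ⟨(2:ℝ)⁻¹ • (f₀ + (i : C₀(X, E))), hg2S⟩
      have hexp : T ((2:ℝ)⁻¹ • (f₀ + (i : C₀(X, E)))) y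
          = (2:ℝ)⁻¹ • (T f₀ y + T (i : C₀(X, E)) y) := by
        rw [map_smul, map_add]
        rfl
      have hadd : ‖T f₀ y + T (i : C₀(X, E)) y‖ = 2 := by
        rw [hexp, norm_smul] at h1
        generalize hr : ‖T f₀ y + T (i : C₀(X, E)) y‖ = r at h1 ⊢
        rw [Real.norm_eq_abs] at h1
        rw [abs_of_pos (by norm_num : (0:ℝ) < (2:ℝ)⁻¹)] at h1
        linarith
      have e1 : ‖T f₀ y‖ = ‖T (i : C₀(X, E)) y‖ := (hnorm1 i₀).trans (hnorm1 i).symm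
      have e2 : ‖T f₀ y + T (i : C₀(X, E)) y‖ = ‖T f₀ y‖ + ‖T (i : C₀(X, E)) y‖ := by
        rw [hadd, show ‖T f₀ y‖ = 1 from hnorm1 i₀, hnorm1 i]; norm_num
      exact (eq_of_norm_eq_of_norm_add_eq e1 e2).symm
  have hwne : T f₀ y ≠ 0 := by
    intro h
    have := hnorm1 i₀
    rw [show ((i₀ : C₀(X, E))) = f₀ from rfl, h, norm_zero] at this
    norm_num at this
  obtain ⟨μ, hμ, hμval⟩ := exists_dual_vector ℝ (T f₀ y) (norm_ne_zero_iff.mpr hwne)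
  have hw1 : ‖T f₀ y‖ = 1 := hnorm1 i₀
  rw [hw1] at hμval
  refine ⟨y, ⟨f₀, hf₀⟩, μ, hμ, ?_⟩
  intro f hf
  refine ⟨?_, hTnorm ⟨f, hf⟩⟩
  rw [weq ⟨f, hf⟩]
  exact_mod_cast hμval

/-- With `Y₁ = ⋃_{x ∈ X} Q_x`, one has `‖f‖ = sup{‖Tf(y)‖ : y ∈ Y₁}`. -/
theorem norm_eq_sSup_on_Y1 [Nontrivial E] [StrictConvexSpace ℝ F]
    (T : C₀(X, E) →ₗᵢ[ℝ] C₀(Y, F)) (f : C₀(X, E)) :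
    ‖f‖ = sSup {r : ℝ | ∃ y ∈ ⋃ x : X, Qset T x, r = ‖T f y‖} := by
  rcases eq_or_ne f 0 with rfl | hf
  · have hsub : {r : ℝ | ∃ y ∈ ⋃ x : X, Qset T x, r = ‖T (0 : C₀(X, E)) y‖} ⊆ {0} := by
      rintro r ⟨y, _, hr⟩
      simp only [map_zero] at hr
      simpa using hr
    rcases Set.subset_singleton_iff_eq.mp hsub with h | h
    · rw [h, Real.sSup_empty, norm_zero]
    · rw [h, csSup_singleton, norm_zero]
  · obtain ⟨x, hx⟩ := myExists_norm_eq f hf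
    have hpos : 0 < ‖f‖ := norm_pos_iff.mpr hf
    have hfx : f x ≠ 0 := by
      intro h
      rw [h, norm_zero] at hx
      exact absurd hx.symm (ne_of_gt hpos)
    obtain ⟨ν, hν, hνfx⟩ := exists_dual_vector ℝ (f x) (norm_ne_zero_iff.mpr hfx)
    have hνfx' : ν (f x) = ‖f x‖ := by exact_mod_cast hνfx
    have hgS : (‖f‖⁻¹ • f) ∈ Sset x ν := by
      constructor
      · have : (‖f‖⁻¹ • f) x = ‖f‖⁻¹ • f x := rfl
        rw [this, map_smul, smul_eq_mul, hνfx', hx, inv_mul_cancel₀ (ne_of_gt hpos)]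
      · rw [norm_smul, Real.norm_eq_abs, abs_of_pos (by positivity), inv_mul_cancel₀ (ne_of_gt hpos)]
    obtain ⟨y, hSne, μ, hμ, hR⟩ := Qnu_nonempty T x ν hν ⟨_, hgS⟩
    obtain ⟨hμval, hTgnorm⟩ := hR _ hgS
    have hymem : y ∈ ⋃ x : X, Qset T x := by
      refine Set.mem_iUnion.mpr ⟨x, ?_⟩
      exact Set.mem_biUnion hν ⟨hSne, μ, hμ, hR⟩
    have hTgy : ‖T (‖f‖⁻¹ • f) y‖ = 1 := by
      refine le_antisymm ?_ ?_
      · refine le_trans (myNorm_apply_le _ _) ?_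
        rw [T.norm_map]
        exact le_of_eq hgS.2
      · calc (1:ℝ) = μ (T (‖f‖⁻¹ • f) y) := hμval.symm
          _ ≤ ‖μ (T (‖f‖⁻¹ • f) y)‖ := le_abs_self _
          _ ≤ ‖μ‖ * ‖T (‖f‖⁻¹ • f) y‖ := μ.le_opNorm _
          _ = ‖T (‖f‖⁻¹ • f) y‖ := by rw [hμ, one_mul]
    have hTfy : ‖T f y‖ = ‖f‖ := by
      have h1 : T f = ‖f‖ • T (‖f‖⁻¹ • f) := by
        rw [map_smul, smul_smul, mul_inv_cancel₀ (ne_of_gt hpos), one_smul]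
      have h2 : T f y = ‖f‖ • T (‖f‖⁻¹ • f) y := by rw [h1]; rfl
      rw [h2, norm_smul, Real.norm_eq_abs, abs_of_pos hpos, hTgy, mul_one]
    have hbdd : ∀ r ∈ {r : ℝ | ∃ y ∈ ⋃ x : X, Qset T x, r = ‖T f y‖}, r ≤ ‖f‖ := by
      rintro r ⟨y', _, rfl⟩
      exact le_trans (myNorm_apply_le _ _) (le_of_eq (T.norm_map f))
    refine le_antisymm ?_ (csSup_le ⟨‖f‖, y, hymem, hTfy.symm⟩ hbdd)
    exact le_csSup ⟨‖f‖, hbdd⟩ ⟨y, hymem, hTfy.symm⟩
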